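/- Let N, L be positive integers, u_1,…,u_L ∈ ℂ^N nonzero vectors, y_1,…,y_L ≥ 0, γ > 0, μ ≥ 0. Then there exists a minimum step size ᾱ > 0 with the following property: for every sequence (Q_k)_{k≥0} of N×N complex Hermitian positive semidefinite matrices and every sequence of step sizes α_k ∈ (0, ᾱ) such that, for each k, Q_{k+1} minimizes ‖Q − (Q_k − α_k S(Q_k))‖_F over all Hermitian positive semidefinite matrices Q (where S(Q_k) = Σ_{ℓ=1}^L [1/λ_ℓ(Q_k) − y_ℓ/λ_ℓ(Q_k)²] u_ℓ u_ℓ* + μ I), the sequence of objective values J_μ(Q_k) is monotonically nonincreasing: J_μ(Q_{k+1}) ≤ J_μ(Q_k) for all k. -/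

import Mathlib

open Matrix BigOperators
open scoped ComplexOrder

noncomputable section

namespace MmW

variable {N L : ℕ}

/-- Squared Euclidean norm of a complex vector. -/
def nsq (v : Fin N → ℂ) : ℝ := ∑ i, Complex.normSq (v i)

/-- The rank-one matrix `v v*`. -/
def outer (v : Fin N → ℂ) : Matrix (Fin N) (Fin N) ℂ := Matrix.vecMulVec v (star v)

/-- `λ_ℓ(Q) = u_ℓ* (Q + γ⁻¹ I) u_ℓ` (real part; it is real for Hermitian `Q`). -/
def lam (u : Fin L → Fin N → ℂ) (γ : ℝ) (Q : Matrix (Fin N) (Fin N) ℂ) (ℓ : Fin L) : ℝ :=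
  (star (u ℓ) ⬝ᵥ ((Q + ((γ : ℂ))⁻¹ • (1 : Matrix (Fin N) (Fin N) ℂ)) *ᵥ u ℓ)).re

/-- The regularized ML objective `J_μ(Q) = Σ_ℓ [log λ_ℓ(Q) + y_ℓ/λ_ℓ(Q)] + μ·Tr(Q)`. -/
def Jmu (u : Fin L → Fin N → ℂ) (y : Fin L → ℝ) (γ μ : ℝ)
    (Q : Matrix (Fin N) (Fin N) ℂ) : ℝ :=
  (∑ ℓ, (Real.log (lam u γ Q ℓ) + y ℓ / lam u γ Q ℓ)) + μ * Q.trace.re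

/-- The `(L+1)×(L+1)` real matrix `A`, indexed by `0,…,L`:
`A_{00} = N`, `A_{0j} = ‖u_j‖²`, `A_{ℓ0} = ‖u_ℓ‖²`, `A_{ℓj} = |u_ℓ* u_j|²`. -/
def Amat (N : ℕ) (u : Fin L → Fin N → ℂ) : Matrix (Fin (L+1)) (Fin (L+1)) ℝ :=
  fun i j =>
    Fin.cases
      (Fin.cases (N : ℝ) (fun j' => nsq (u j')) j)
      (fun i' => Fin.cases (nsq (u i')) (fun j' => Complex.normSq (star (u i') ⬝ᵥ u j')) j)
      i

/-- The separable objective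
`f(z) = μ z_0 + Σ_ℓ [log(z_ℓ + γ⁻¹‖u_ℓ‖²) + y_ℓ/(z_ℓ + γ⁻¹‖u_ℓ‖²)]`. -/
def fobj (u : Fin L → Fin N → ℂ) (y : Fin L → ℝ) (γ μ : ℝ) (z : Fin (L+1) → ℝ) : ℝ :=
  μ * z 0 + ∑ ℓ, (Real.log (z ℓ.succ + γ⁻¹ * nsq (u ℓ)) + y ℓ / (z ℓ.succ + γ⁻¹ * nsq (u ℓ)))

/-- The matrix `Q = Σ_ℓ q_ℓ u_ℓ u_ℓ* + q_0 I` built from `q ∈ ℝ^{L+1}`. -/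
def Qof (u : Fin L → Fin N → ℂ) (q : Fin (L+1) → ℝ) : Matrix (Fin N) (Fin N) ℂ :=
  (∑ ℓ, ((q ℓ.succ : ℝ) : ℂ) • outer (u ℓ)) + ((q 0 : ℝ) : ℂ) • 1

/-- Frobenius norm `‖M‖_F = (Tr(M*M))^{1/2}`. -/
def frob (M : Matrix (Fin N) (Fin N) ℂ) : ℝ := Real.sqrt ((Mᴴ * M).trace.re)

/-- The gradient matrix `S(Q) = Σ_ℓ [1/λ_ℓ(Q) − y_ℓ/λ_ℓ(Q)²] u_ℓ u_ℓ* + μ I`. -/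
def Smat (u : Fin L → Fin N → ℂ) (y : Fin L → ℝ) (γ μ : ℝ)
    (Q : Matrix (Fin N) (Fin N) ℂ) : Matrix (Fin N) (Fin N) ℂ :=
  (∑ ℓ, (((lam u γ Q ℓ)⁻¹ - y ℓ / (lam u γ Q ℓ) ^ 2 : ℝ) : ℂ) • outer (u ℓ))
    + ((μ : ℝ) : ℂ) • 1

/-- The gradient `∇f(z)`: component `0` is `μ`, component `ℓ ≥ 1` is
`1/(z_ℓ + γ⁻¹‖u_ℓ‖²) − y_ℓ/(z_ℓ + γ⁻¹‖u_ℓ‖²)²`. -/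
def gradf (u : Fin L → Fin N → ℂ) (y : Fin L → ℝ) (γ μ : ℝ) (z : Fin (L+1) → ℝ) :
    Fin (L+1) → ℝ :=
  Fin.cases μ
    (fun ℓ => (z ℓ.succ + γ⁻¹ * nsq (u ℓ))⁻¹ - y ℓ / (z ℓ.succ + γ⁻¹ * nsq (u ℓ)) ^ 2)


-- auxiliary lemmas (to be inserted above stmt6)
def fn2 (M : Matrix (Fin N) (Fin N) ℂ) : ℝ := ∑ i, ∑ j, Complex.normSq (M i j)

def rip (A B : Matrix (Fin N) (Fin N) ℂ) : ℝ :=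
  ∑ i, ∑ j, ((starRingEnd ℂ) (A i j) * B i j).re

lemma conj_mul_self_re (z : ℂ) : ((starRingEnd ℂ) z * z).re = Complex.normSq z := by
  simp [Complex.normSq_apply, Complex.mul_re]

lemma fn2_nonneg (M : Matrix (Fin N) (Fin N) ℂ) : 0 ≤ fn2 M :=
  Finset.sum_nonneg fun i _ => Finset.sum_nonneg fun j _ => Complex.normSq_nonneg _

lemma frob_eq (M : Matrix (Fin N) (Fin N) ℂ) : frob M = Real.sqrt (fn2 M) := by
  have h : (Mᴴ * M).trace.re = fn2 M := by
    rw [Matrix.trace]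
    simp only [Matrix.diag_apply, Matrix.mul_apply, Matrix.conjTranspose_apply,
      Complex.re_sum, Complex.star_def, conj_mul_self_re]
    rw [Finset.sum_comm]; rfl
  rw [frob, h]

lemma normSq_add_real_smul (a b : ℂ) (t : ℝ) :
    Complex.normSq (a + (t:ℂ) * b)
      = Complex.normSq a + 2 * t * ((starRingEnd ℂ) a * b).re + t^2 * Complex.normSq b := by
  simp [Complex.normSq_apply, Complex.mul_re, Complex.mul_im, Complex.add_re, Complex.add_im]
  ring

lemma fn2_add_smul (A B : Matrix (Fin N) (Fin N) ℂ) (t : ℝ) :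
    fn2 (A + (t:ℂ) • B) = fn2 A + 2 * t * rip A B + t^2 * fn2 B := by
  simp only [fn2, rip, Matrix.add_apply, Matrix.smul_apply, smul_eq_mul, normSq_add_real_smul,
    Finset.sum_add_distrib, ← Finset.mul_sum]

lemma rip_self (M : Matrix (Fin N) (Fin N) ℂ) : rip M M = fn2 M := by
  simp [rip, fn2, conj_mul_self_re, Complex.normSq_apply]

lemma rip_add_left (A B C : Matrix (Fin N) (Fin N) ℂ) :
    rip (A + B) C = rip A C + rip B C := by
  simp [rip, add_mul, Finset.sum_add_distrib]

lemma rip_smul_left (t : ℝ) (A B : Matrix (Fin N) (Fin N) ℂ) :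
    rip ((t:ℂ) • A) B = t * rip A B := by
  simp [rip, Finset.mul_sum, mul_assoc]

lemma rip_neg_right (A B : Matrix (Fin N) (Fin N) ℂ) : rip A (-B) = - rip A B := by
  simp only [rip, Matrix.neg_apply, mul_neg, Complex.neg_re, Finset.sum_neg_distrib]

lemma rip_sum_left {ι : Type*} (s : Finset ι) (f : ι → Matrix (Fin N) (Fin N) ℂ)
    (B : Matrix (Fin N) (Fin N) ℂ) : rip (∑ ℓ ∈ s, f ℓ) B = ∑ ℓ ∈ s, rip (f ℓ) B := by
  classical
  induction s using Finset.induction with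
  | empty => simp [rip]
  | insert _ _ h ih => rw [Finset.sum_insert h, rip_add_left, ih, Finset.sum_insert h]

lemma rip_one_left (B : Matrix (Fin N) (Fin N) ℂ) : rip 1 B = B.trace.re := by
  simp [rip, Matrix.one_apply, Matrix.trace, apply_ite, Complex.re_sum]

lemma scalar_descent (c t t' yv : ℝ) (hc : 0 < c) (ht : c ≤ t) (ht' : c ≤ t') (hy : 0 ≤ yv) :
    Real.log t' + yv / t' ≤ Real.log t + yv / t + (t⁻¹ - yv / t^2) * (t' - t)
      + (yv / c^3) * (t' - t)^2 := by
  have htp : 0 < t := hc.trans_le ht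
  have ht'p : 0 < t' := hc.trans_le ht'
  have hlog : Real.log t' - Real.log t ≤ t⁻¹ * (t' - t) := by
    have h := Real.log_le_sub_one_of_pos (show 0 < t'/t by positivity)
    rw [Real.log_div (ne_of_gt ht'p) (ne_of_gt htp)] at h
    have e : t'/t - 1 = t⁻¹ * (t' - t) := by field_simp
    linarith [e ▸ h]
  have key : yv / t' - yv / t + (yv / t^2) * (t' - t) = yv * (t'-t)^2 / (t^2 * t') := by
    field_simp; ring
  have hbound : yv * (t'-t)^2 / (t^2 * t') ≤ yv / c^3 * (t'-t)^2 := by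
    have h1 : c^3 ≤ t^2 * t' := by
      have h2 : c*c ≤ t*t := mul_le_mul ht ht hc.le htp.le
      have h3 : (c*c)*c ≤ (t*t)*t' := mul_le_mul h2 ht' hc.le (by positivity)
      nlinarith [h3]
    have := div_le_div_of_nonneg_left (by positivity : (0:ℝ) ≤ yv * (t'-t)^2)
      (by positivity : (0:ℝ) < c^3) h1
    calc yv * (t'-t)^2 / (t^2 * t') ≤ yv * (t'-t)^2 / c^3 := this
      _ = yv / c^3 * (t'-t)^2 := by ring
  have e2 : (t⁻¹ - yv / t^2) * (t' - t) = t⁻¹ * (t'-t) - (yv / t^2) * (t'-t) := by ring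
  linarith [key, hbound, hlog, e2.ge, e2.le]

lemma proj_scalar (cc n : ℝ) (hn : 0 ≤ n)
    (h : ∀ t : ℝ, 0 < t → t ≤ 1 → 0 ≤ 2 * t * cc + t^2 * n) : 0 ≤ cc := by
  by_contra hc
  push_neg at hc
  rcases eq_or_lt_of_le hn with h0 | h0
  · have := h 1 one_pos le_rfl; nlinarith
  · set t := min 1 (-cc / n) with ht
    have htpos : 0 < t := lt_min one_pos (div_pos (by linarith) h0)
    have ht1 : t ≤ 1 := min_le_left _ _
    have htn : t * n ≤ -cc := by
      have h2 : t ≤ -cc / n := min_le_right _ _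
      calc t * n ≤ (-cc/n) * n := by nlinarith
        _ = -cc := by field_simp
    have := h t htpos ht1
    nlinarith

lemma nsq_pos {v : Fin N → ℂ} (hv : v ≠ 0) : 0 < nsq v := by
  obtain ⟨i, hi⟩ := Function.ne_iff.mp hv
  exact Finset.sum_pos' (fun j _ => Complex.normSq_nonneg _)
    ⟨i, Finset.mem_univ i, by simpa [Complex.normSq_pos] using hi⟩

lemma dot_star_self_re (v : Fin N → ℂ) : (star v ⬝ᵥ v).re = nsq v := by
  simp [dotProduct, Complex.re_sum, nsq, Complex.normSq_apply, Complex.mul_re]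

lemma lam_eq (u : Fin L → Fin N → ℂ) (γ : ℝ)
    (Q : Matrix (Fin N) (Fin N) ℂ) (ℓ : Fin L) :
    lam u γ Q ℓ = (star (u ℓ) ⬝ᵥ (Q *ᵥ u ℓ)).re + γ⁻¹ * nsq (u ℓ) := by
  rw [lam, Matrix.add_mulVec, dotProduct_add, Complex.add_re]
  congr 1
  rw [Matrix.smul_mulVec, Matrix.one_mulVec, dotProduct_smul]
  rw [smul_eq_mul, ← Complex.ofReal_inv]
  rw [Complex.re_ofReal_mul, dot_star_self_re]

lemma lam_sub (u : Fin L → Fin N → ℂ) (γ : ℝ)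
    (Q Q' : Matrix (Fin N) (Fin N) ℂ) (ℓ : Fin L) :
    lam u γ Q' ℓ - lam u γ Q ℓ = (star (u ℓ) ⬝ᵥ ((Q' - Q) *ᵥ u ℓ)).re := by
  rw [lam_eq u γ Q ℓ, lam_eq u γ Q' ℓ, Matrix.sub_mulVec, dotProduct_sub, Complex.sub_re]
  ring

lemma psd_re_nonneg {Q : Matrix (Fin N) (Fin N) ℂ} (hQ : Q.PosSemidef)
    (v : Fin N → ℂ) : 0 ≤ (star v ⬝ᵥ (Q *ᵥ v)).re :=
  (Complex.le_def.mp (hQ.dotProduct_mulVec_nonneg v)).1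

lemma lam_ge (u : Fin L → Fin N → ℂ) (γ : ℝ)
    {Q : Matrix (Fin N) (Fin N) ℂ} (hQ : Q.PosSemidef) (ℓ : Fin L) :
    γ⁻¹ * nsq (u ℓ) ≤ lam u γ Q ℓ := by
  rw [lam_eq u γ Q ℓ]
  linarith [psd_re_nonneg hQ (u ℓ)]

lemma psd_segment {A B : Matrix (Fin N) (Fin N) ℂ} (hA : A.PosSemidef)
    (hB : B.PosSemidef) {t : ℝ} (h0 : 0 ≤ t) (h1 : t ≤ 1) :
    (A + (t:ℂ) • (B - A)).PosSemidef := by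
  have he : A + (t:ℂ) • (B - A) = ((1 - t : ℝ):ℂ) • A + ((t:ℝ):ℂ) • B := by
    push_cast
    module
  rw [he]
  refine Matrix.PosSemidef.of_dotProduct_mulVec_nonneg ?_ ?_
  · show _ᴴ = _
    rw [Matrix.conjTranspose_add, Matrix.conjTranspose_smul, Matrix.conjTranspose_smul,
      hA.1, hB.1]
    simp [Complex.star_def, Complex.conj_ofReal]
  · intro x
    rw [Matrix.add_mulVec, dotProduct_add]
    refine add_nonneg ?_ ?_
    · rw [Matrix.smul_mulVec, dotProduct_smul, smul_eq_mul]
      exact mul_nonneg (by exact_mod_cast Complex.zero_le_real.mpr (by linarith)) (hA.dotProduct_mulVec_nonneg x)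
    · rw [Matrix.smul_mulVec, dotProduct_smul, smul_eq_mul]
      exact mul_nonneg (by exact_mod_cast Complex.zero_le_real.mpr h0) (hB.dotProduct_mulVec_nonneg x)

lemma rip_outer (v : Fin N → ℂ) (Δ : Matrix (Fin N) (Fin N) ℂ) :
    rip (outer v) Δ = (star v ⬝ᵥ (Δ *ᵥ v)).re := by
  simp only [rip, outer, Matrix.vecMulVec_apply, dotProduct, Matrix.mulVec, Finset.mul_sum,
    Complex.re_sum, Pi.star_apply]
  refine Finset.sum_congr rfl fun i _ => Finset.sum_congr rfl fun j _ => ?_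
  congr 1
  simp [Complex.star_def, dotProduct]
  ring

lemma rip_outer_sq_le (v : Fin N → ℂ) (Δ : Matrix (Fin N) (Fin N) ℂ) :
    (rip (outer v) Δ)^2 ≤ (nsq v)^2 * fn2 Δ := by
  set S : ℝ := ∑ i, ∑ j, (‖v i‖ * ‖v j‖) * ‖Δ i j‖ with hS
  have habs : |rip (outer v) Δ| ≤ S := by
    rw [rip, hS]
    refine (Finset.abs_sum_le_sum_abs _ _).trans (Finset.sum_le_sum fun i _ => ?_)
    refine (Finset.abs_sum_le_sum_abs _ _).trans (Finset.sum_le_sum fun j _ => ?_)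
    calc |((starRingEnd ℂ) (outer v i j) * Δ i j).re|
        ≤ ‖(starRingEnd ℂ) (outer v i j) * Δ i j‖ := Complex.abs_re_le_norm _
      _ = (‖v i‖ * ‖v j‖) * ‖Δ i j‖ := by
          simp [outer, Matrix.vecMulVec_apply, _root_.map_mul, Complex.norm_conj]
  have hCS : S^2 ≤ (nsq v)^2 * fn2 Δ := by
    have h1 : S = ∑ p : Fin N × Fin N, (‖v p.1‖ * ‖v p.2‖)
        * ‖Δ p.1 p.2‖ := by
      rw [hS, Fintype.sum_prod_type]
    have h2 := Finset.sum_mul_sq_le_sq_mul_sq Finset.univ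
      (fun p : Fin N × Fin N => ‖v p.1‖ * ‖v p.2‖)
      (fun p : Fin N × Fin N => ‖Δ p.1 p.2‖)
    rw [h1]
    have e1 : (∑ p : Fin N × Fin N, (‖v p.1‖ * ‖v p.2‖)^2)
        = (nsq v)^2 := by
      rw [Fintype.sum_prod_type]
      simp only [mul_pow, Complex.sq_norm, ← Finset.sum_mul, ← Finset.mul_sum]
      rw [nsq]; ring
    have e2 : (∑ p : Fin N × Fin N, (‖Δ p.1 p.2‖)^2) = fn2 Δ := by
      rw [Fintype.sum_prod_type]
      simp only [Complex.sq_norm]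
      rfl
    calc (∑ p : Fin N × Fin N, (‖v p.1‖ * ‖v p.2‖)
          * ‖Δ p.1 p.2‖)^2
        ≤ (∑ p : Fin N × Fin N, (‖v p.1‖ * ‖v p.2‖)^2)
          * (∑ p : Fin N × Fin N, (‖Δ p.1 p.2‖)^2) := h2
      _ = (nsq v)^2 * fn2 Δ := by rw [e1, e2]
  calc (rip (outer v) Δ)^2 = |rip (outer v) Δ|^2 := (sq_abs _).symm
    _ ≤ S^2 := pow_le_pow_left₀ (abs_nonneg _) habs 2
    _ ≤ (nsq v)^2 * fn2 Δ := hCS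

lemma real_smul_matrix (t : ℝ) (M : Matrix (Fin N) (Fin N) ℂ) : t • M = ((t:ℝ):ℂ) • M := by
  ext i j
  simp [Matrix.smul_apply, Complex.real_smul]

lemma fn2_le_of_sqrt {a b : ℝ} (ha : 0 ≤ a) (hb : 0 ≤ b)
    (h : Real.sqrt a ≤ Real.sqrt b) : a ≤ b := by
  calc a = (Real.sqrt a)^2 := (Real.sq_sqrt ha).symm
    _ ≤ (Real.sqrt b)^2 := pow_le_pow_left₀ (Real.sqrt_nonneg _) h 2
    _ = b := Real.sq_sqrt hb


/-- Proposition 1: there is a minimum step size `ᾱ > 0` such that for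
any sequence of Hermitian PSD matrices `Q_k` and step sizes `α_k ∈ (0, ᾱ)` in which
`Q_{k+1}` minimizes `‖Q − (Q_k − α_k S(Q_k))‖_F` over PSD `Q`, the objective values
`J_μ(Q_k)` are monotonically nonincreasing. -/
theorem stmt6 (N L : ℕ) (hN : 0 < N) (hL : 0 < L)
    (u : Fin L → Fin N → ℂ) (hu : ∀ ℓ, u ℓ ≠ 0)
    (y : Fin L → ℝ) (hy : ∀ ℓ, 0 ≤ y ℓ)
    (γ : ℝ) (hγ : 0 < γ) (μ : ℝ) (hμ : 0 ≤ μ) :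
    ∃ αbar : ℝ, 0 < αbar ∧
      ∀ (Q : ℕ → Matrix (Fin N) (Fin N) ℂ) (α : ℕ → ℝ),
        (∀ k, (Q k).PosSemidef) →
        (∀ k, 0 < α k ∧ α k < αbar) →
        (∀ k, ∀ Q' : Matrix (Fin N) (Fin N) ℂ, Q'.PosSemidef →
          frob (Q (k+1) - (Q k - α k • Smat u y γ μ (Q k)))
            ≤ frob (Q' - (Q k - α k • Smat u y γ μ (Q k)))) →
        ∀ k, Jmu u y γ μ (Q (k+1)) ≤ Jmu u y γ μ (Q k) := by
  classical
  have hcpos : ∀ ℓ, 0 < γ⁻¹ * nsq (u ℓ) := fun ℓ => mul_pos (inv_pos.mpr hγ) (nsq_pos (hu ℓ))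
  have hK : ∀ ℓ, 0 ≤ y ℓ / (γ⁻¹ * nsq (u ℓ))^3 := fun ℓ =>
    div_nonneg (hy ℓ) (pow_nonneg (hcpos ℓ).le 3)
  have hsumK : 0 ≤ ∑ ℓ, (y ℓ / (γ⁻¹ * nsq (u ℓ))^3) * (nsq (u ℓ))^2 :=
    Finset.sum_nonneg fun ℓ _ => mul_nonneg (hK ℓ) (sq_nonneg _)
  set C : ℝ := 1 + ∑ ℓ, (y ℓ / (γ⁻¹ * nsq (u ℓ))^3) * (nsq (u ℓ))^2 with hCdef
  have hC1 : 1 ≤ C := by rw [hCdef]; linarith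
  have hCpos : 0 < C := by linarith
  refine ⟨1 / C, by positivity, ?_⟩
  intro Q α hPSD hα hmin k
  obtain ⟨hαpos, hαlt⟩ := hα k
  -- Step 1: projection variational inequality
  have hripAB : 0 ≤ rip (Q (k+1) - Q k + ((α k : ℝ):ℂ) • Smat u y γ μ (Q k))
      (Q k - Q (k+1)) := by
    refine proj_scalar _ (fn2 (Q k - Q (k+1))) (fn2_nonneg _) ?_
    intro t ht0 ht1
    have hpsd' : (Q (k+1) + (t:ℂ) • (Q k - Q (k+1))).PosSemidef :=
      psd_segment (hPSD (k+1)) (hPSD k) ht0.le ht1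
    have hfr := hmin k _ hpsd'
    rw [frob_eq, frob_eq] at hfr
    have hfn := fn2_le_of_sqrt (fn2_nonneg _) (fn2_nonneg _) hfr
    have e1 : Q (k+1) - (Q k - α k • Smat u y γ μ (Q k))
        = Q (k+1) - Q k + ((α k : ℝ):ℂ) • Smat u y γ μ (Q k) := by
      rw [real_smul_matrix]; module
    have e2 : (Q (k+1) + (t:ℂ) • (Q k - Q (k+1))) - (Q k - α k • Smat u y γ μ (Q k))
        = (Q (k+1) - Q k + ((α k : ℝ):ℂ) • Smat u y γ μ (Q k)) + (t:ℂ) • (Q k - Q (k+1)) := by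
      rw [real_smul_matrix]; module
    rw [e1, e2, fn2_add_smul (Q (k+1) - Q k + ((α k : ℝ):ℂ) • Smat u y γ μ (Q k))
      (Q k - Q (k+1)) t] at hfn
    linarith
  have hproj : α k * rip (Smat u y γ μ (Q k)) (Q (k+1) - Q k) ≤ - fn2 (Q (k+1) - Q k) := by
    have eB : Q k - Q (k+1) = -(Q (k+1) - Q k) := by abel
    rw [eB, rip_neg_right, rip_add_left, rip_smul_left, rip_self] at hripAB
    linarith
  -- Step 2: scalar descent for each ℓ
  have hdesc : ∀ ℓ : Fin L,
      Real.log (lam u γ (Q (k+1)) ℓ) + y ℓ / lam u γ (Q (k+1)) ℓ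
        ≤ Real.log (lam u γ (Q k) ℓ) + y ℓ / lam u γ (Q k) ℓ
          + ((lam u γ (Q k) ℓ)⁻¹ - y ℓ / (lam u γ (Q k) ℓ)^2)
            * (lam u γ (Q (k+1)) ℓ - lam u γ (Q k) ℓ)
          + (y ℓ / (γ⁻¹ * nsq (u ℓ))^3) * (lam u γ (Q (k+1)) ℓ - lam u γ (Q k) ℓ)^2 :=
    fun ℓ => scalar_descent _ _ _ _ (hcpos ℓ) (lam_ge u γ (hPSD k) ℓ)
      (lam_ge u γ (hPSD (k+1)) ℓ) (hy ℓ)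
  have hsum : ∑ ℓ, (Real.log (lam u γ (Q (k+1)) ℓ) + y ℓ / lam u γ (Q (k+1)) ℓ)
      ≤ (∑ ℓ, (Real.log (lam u γ (Q k) ℓ) + y ℓ / lam u γ (Q k) ℓ))
        + (∑ ℓ, ((lam u γ (Q k) ℓ)⁻¹ - y ℓ / (lam u γ (Q k) ℓ)^2)
            * (lam u γ (Q (k+1)) ℓ - lam u γ (Q k) ℓ))
        + ∑ ℓ, (y ℓ / (γ⁻¹ * nsq (u ℓ))^3)
            * (lam u γ (Q (k+1)) ℓ - lam u γ (Q k) ℓ)^2 := by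
    rw [← Finset.sum_add_distrib, ← Finset.sum_add_distrib]
    exact Finset.sum_le_sum fun ℓ _ => hdesc ℓ
  -- Step 3: identify the linear term with rip S Δ
  have hrS : rip (Smat u y γ μ (Q k)) (Q (k+1) - Q k)
      = (∑ ℓ, ((lam u γ (Q k) ℓ)⁻¹ - y ℓ / (lam u γ (Q k) ℓ)^2)
            * (lam u γ (Q (k+1)) ℓ - lam u γ (Q k) ℓ))
        + μ * ((Q (k+1)).trace.re - (Q k).trace.re) := by
    have htr : (Q (k+1) - Q k).trace.re = (Q (k+1)).trace.re - (Q k).trace.re := by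
      rw [Matrix.trace_sub, Complex.sub_re]
    rw [Smat, rip_add_left, rip_sum_left, rip_smul_left, rip_one_left, htr]
    congr 1
    refine Finset.sum_congr rfl fun ℓ _ => ?_
    rw [rip_smul_left, rip_outer, ← lam_sub u γ (Q k) (Q (k+1)) ℓ]
  -- Step 4: quadratic bound
  have hq : ∑ ℓ, (y ℓ / (γ⁻¹ * nsq (u ℓ))^3) * (lam u γ (Q (k+1)) ℓ - lam u γ (Q k) ℓ)^2
      ≤ (C - 1) * fn2 (Q (k+1) - Q k) := by
    have h1 : ∀ ℓ : Fin L, (lam u γ (Q (k+1)) ℓ - lam u γ (Q k) ℓ)^2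
        ≤ (nsq (u ℓ))^2 * fn2 (Q (k+1) - Q k) := by
      intro ℓ
      rw [lam_sub u γ (Q k) (Q (k+1)) ℓ, ← rip_outer]
      exact rip_outer_sq_le _ _
    calc ∑ ℓ, (y ℓ / (γ⁻¹ * nsq (u ℓ))^3) * (lam u γ (Q (k+1)) ℓ - lam u γ (Q k) ℓ)^2
        ≤ ∑ ℓ, (y ℓ / (γ⁻¹ * nsq (u ℓ))^3) * ((nsq (u ℓ))^2 * fn2 (Q (k+1) - Q k)) :=
          Finset.sum_le_sum fun ℓ _ => mul_le_mul_of_nonneg_left (h1 ℓ) (hK ℓ)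
      _ = (∑ ℓ, (y ℓ / (γ⁻¹ * nsq (u ℓ))^3) * (nsq (u ℓ))^2) * fn2 (Q (k+1) - Q k) := by
          rw [Finset.sum_mul]; exact Finset.sum_congr rfl fun ℓ _ => by ring
      _ = (C - 1) * fn2 (Q (k+1) - Q k) := by rw [hCdef]; ring
  -- Step 5: combine
  have hF : 0 ≤ fn2 (Q (k+1) - Q k) := fn2_nonneg _
  have haC : α k * C < 1 := (lt_div_iff₀ hCpos).mp (by simpa using hαlt)
  have hrs : rip (Smat u y γ μ (Q k)) (Q (k+1) - Q k)
      + (∑ ℓ, (y ℓ / (γ⁻¹ * nsq (u ℓ))^3)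
          * (lam u γ (Q (k+1)) ℓ - lam u γ (Q k) ℓ)^2) ≤ 0 := by
    set F := fn2 (Q (k+1) - Q k) with hFdef
    set r := rip (Smat u y γ μ (Q k)) (Q (k+1) - Q k) with hrdef
    set s := ∑ ℓ, (y ℓ / (γ⁻¹ * nsq (u ℓ))^3)
        * (lam u γ (Q (k+1)) ℓ - lam u γ (Q k) ℓ)^2 with hsdef
    have h5 : α k * s ≤ α k * ((C - 1) * F) := mul_le_mul_of_nonneg_left hq hαpos.le
    have h6 : 0 ≤ (1 - α k * C) * F := mul_nonneg (by linarith) hF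
    nlinarith [hproj, h5, h6, hF, hαpos]
  have e3 : μ * ((Q (k+1)).trace.re - (Q k).trace.re)
      = μ * (Q (k+1)).trace.re - μ * (Q k).trace.re := by ring
  rw [Jmu, Jmu]
  linarith [hsum, hrS, hrs, e3.le, e3.ge]

end MmW
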